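/- Suppose x* is a local minimum of f on Ω = {x : u(x) ≤ 0}, u(x*) = 0, both f and u are Hadamard directionally differentiable at x*, the regularity condition cl{g : u'_H(x*,g) < 0} = {g : u'_H(x*,g) ≤ 0} holds, E_*(f) is a lower exhauster of f at x*, and E*(u) is an upper exhauster of u at x*. Then ⋃_{C ∈ E*(u)} [−K⁺(C)] ⊆ ⋃_{C ∈ E_*(f)} K⁺(C). -/

import Mathlib

open Set Pointwise

/-- The conic hull `cone{C}` of a set `C`. -/
def coneHull {n : ℕ} (C : Set (EuclideanSpace ℝ (Fin n))) : Set (EuclideanSpace ℝ (Fin n)) :=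
  {c | ∃ t : ℝ, 0 ≤ t ∧ ∃ w ∈ C, c = t • w}

/-- The conjugate (dual) cone `K⁺(C)` of the conic hull of `C`. -/
def Kplus {n : ℕ} (C : Set (EuclideanSpace ℝ (Fin n))) : Set (EuclideanSpace ℝ (Fin n)) :=
  {y | ∀ v ∈ coneHull C, 0 ≤ (inner ℝ v y : ℝ)}

/-- necessary condition for a constrained local minimum in terms of a lower
exhauster of `f` and an upper exhauster of `u`. -/
theorem min_cond_lower_upper {n : ℕ}
(f u : EuclideanSpace ℝ (Fin n) → ℝ) (xs : EuclideanSpace ℝ (Fin n))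
    (φf φu : EuclideanSpace ℝ (Fin n) → ℝ)
    (hxs : u xs = 0)
    (hf : ∀ g : EuclideanSpace ℝ (Fin n),
      Filter.Tendsto
        (fun p : ℝ × EuclideanSpace ℝ (Fin n) => (f (xs + p.1 • p.2) - f xs) / p.1)
        (nhdsWithin (0, g) ((Set.Ioi (0:ℝ)) ×ˢ (Set.univ : Set (EuclideanSpace ℝ (Fin n)))))
        (nhds (φf g)))
    (hu : ∀ g : EuclideanSpace ℝ (Fin n),
      Filter.Tendsto
        (fun p : ℝ × EuclideanSpace ℝ (Fin n) => (u (xs + p.1 • p.2) - u xs) / p.1)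
        (nhdsWithin (0, g) ((Set.Ioi (0:ℝ)) ×ˢ (Set.univ : Set (EuclideanSpace ℝ (Fin n)))))
        (nhds (φu g)))
    (hreg : closure {g | φu g < 0} = {g | φu g ≤ 0})
    (Ef Eu : Set (Set (EuclideanSpace ℝ (Fin n))))
    (hEfne : Ef.Nonempty) (hEune : Eu.Nonempty)
    (hEfsets : ∀ C ∈ Ef, C.Nonempty ∧ Convex ℝ C ∧ IsCompact C)
    (hEusets : ∀ C ∈ Eu, C.Nonempty ∧ Convex ℝ C ∧ IsCompact C)
    (hEfbd : ∃ R : ℝ, ∀ C ∈ Ef, C ⊆ Metric.closedBall 0 R)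
    (hEubd : ∃ R : ℝ, ∀ C ∈ Eu, C ⊆ Metric.closedBall 0 R)
    (hmin : IsLocalMinOn f {x | u x ≤ 0} xs)
    (hEf : ∀ g : EuclideanSpace ℝ (Fin n),
      IsGreatest ((fun C => sInf ((fun w => (inner ℝ w g : ℝ)) '' C)) '' Ef) (φf g))
    (hEu : ∀ g : EuclideanSpace ℝ (Fin n),
      IsLeast ((fun C => sSup ((fun v => (inner ℝ v g : ℝ)) '' C)) '' Eu) (φu g)) :
    (⋃ C ∈ Eu, -(Kplus C)) ⊆ ⋃ C ∈ Ef, Kplus C := by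

  classical
  obtain ⟨R, hR⟩ := hEfbd
  obtain ⟨C0, hC0⟩ := hEfne
  obtain ⟨w0, hw0⟩ := (hEfsets C0 hC0).1
  have hR0 : 0 ≤ R := le_trans (norm_nonneg w0) (by
    have := hR C0 hC0 hw0
    simpa [Metric.mem_closedBall, dist_eq_norm] using this)
  have hbdd : ∀ C ∈ Ef, ∀ g : EuclideanSpace ℝ (Fin n),
      BddBelow ((fun w => (inner ℝ w g : ℝ)) '' C) := by
    intro C hC g
    exact (((hEfsets C hC).2.2).image
      (Continuous.inner continuous_id continuous_const)).bddBelow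
  have hLip : ∀ a b : EuclideanSpace ℝ (Fin n), φf a ≤ φf b + R * ‖a - b‖ := by
    intro a b
    obtain ⟨C, hC, hCa⟩ := (hEf a).1
    have hCne := (hEfsets C hC).1
    have h1 : sInf ((fun w => (inner ℝ w a : ℝ)) '' C)
        ≤ sInf ((fun w => (inner ℝ w b : ℝ)) '' C) + R * ‖a - b‖ := by
      rw [← sub_le_iff_le_add]
      apply le_csInf (hCne.image _)
      rintro x ⟨w, hw, rfl⟩
      have hwR : ‖w‖ ≤ R := by
        have := hR C hC hw
        simpa [Metric.mem_closedBall, dist_eq_norm] using this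
      have h2 : (inner ℝ w a : ℝ) - inner ℝ w b ≤ R * ‖a - b‖ := by
        have h3 : (inner ℝ w a : ℝ) - inner ℝ w b = inner ℝ w (a - b) := by
          rw [inner_sub_right]
        rw [h3]
        calc (inner ℝ w (a - b) : ℝ) ≤ ‖w‖ * ‖a - b‖ := real_inner_le_norm _ _
          _ ≤ R * ‖a - b‖ := mul_le_mul_of_nonneg_right hwR (norm_nonneg _)
      have h4 : sInf ((fun w => (inner ℝ w a : ℝ)) '' C) ≤ inner ℝ w a :=
        csInf_le (hbdd C hC a) (mem_image_of_mem _ hw)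
      linarith
    have h5 : sInf ((fun w => (inner ℝ w b : ℝ)) '' C) ≤ φf b :=
      (hEf b).2 (mem_image_of_mem _ hC)
    rw [← hCa]
    linarith
  have hcont : Continuous φf := by
    have hlw : LipschitzWith R.toNNReal φf := by
      apply LipschitzWith.of_dist_le_mul
      intro a b
      rw [Real.dist_eq, dist_eq_norm, Real.coe_toNNReal R hR0, abs_sub_le_iff]
      refine ⟨by linarith [hLip a b], ?_⟩
      have := hLip b a
      rw [norm_sub_rev] at this
      linarith
    exact hlw.continuous
  have keyA : ∀ g : EuclideanSpace ℝ (Fin n), φu g < 0 → 0 ≤ φf g := by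
    intro g hg
    have hpath : Filter.Tendsto (fun t : ℝ => ((t, g) : ℝ × EuclideanSpace ℝ (Fin n)))
        (nhdsWithin 0 (Set.Ioi (0:ℝ)))
        (nhdsWithin (0, g) ((Set.Ioi (0:ℝ)) ×ˢ (Set.univ : Set (EuclideanSpace ℝ (Fin n))))) := by
      apply tendsto_nhdsWithin_of_tendsto_nhds_of_eventually_within
      · exact (Filter.tendsto_id.mono_left nhdsWithin_le_nhds).prodMk_nhds tendsto_const_nhds
      · exact Filter.Eventually.mono self_mem_nhdsWithin
          (fun t ht => Set.mk_mem_prod ht (Set.mem_univ g))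
    have htu := (hu g).comp hpath
    have htf := (hf g).comp hpath
    simp only [Function.comp_def] at htu htf
    have h1 : ∀ᶠ t in nhdsWithin 0 (Set.Ioi (0:ℝ)),
        (u (xs + t • g) - u xs) / t < 0 := htu.eventually (Filter.Tendsto.eventually_lt_const hg Filter.tendsto_id)
    have hev : ∀ᶠ t in nhdsWithin 0 (Set.Ioi (0:ℝ)), u (xs + t • g) ≤ 0 := by
      filter_upwards [h1, self_mem_nhdsWithin] with t ht1 ht2
      have ht2' : (0:ℝ) < t := ht2
      have h2 : (u (xs + t • g) - u xs) / t * t < 0 :=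
        mul_neg_of_neg_of_pos ht1 ht2'
      rw [div_mul_cancel₀ _ (ne_of_gt ht2')] at h2
      rw [hxs] at h2
      linarith
    have hxtend : Filter.Tendsto (fun t : ℝ => xs + t • g)
        (nhdsWithin 0 (Set.Ioi (0:ℝ))) (nhdsWithin xs {x | u x ≤ 0}) := by
      apply tendsto_nhdsWithin_of_tendsto_nhds_of_eventually_within
      · have h0 : Filter.Tendsto (fun t : ℝ => t) (nhdsWithin 0 (Set.Ioi (0:ℝ))) (nhds 0) :=
          Filter.tendsto_id.mono_left nhdsWithin_le_nhds
        have := (h0.smul_const g).const_add xs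
        simpa using this
      · exact hev
    have hminev : ∀ᶠ x in nhdsWithin xs {x | u x ≤ 0}, f xs ≤ f x := hmin
    have hevf : ∀ᶠ t in nhdsWithin 0 (Set.Ioi (0:ℝ)),
        0 ≤ (f (xs + t • g) - f xs) / t := by
      filter_upwards [hxtend.eventually hminev, self_mem_nhdsWithin] with t h1 h2
      have h2' : (0:ℝ) < t := h2
      exact div_nonneg (by linarith) (le_of_lt h2')
    exact ge_of_tendsto htf hevf
  have keyB : ∀ g : EuclideanSpace ℝ (Fin n), φu g ≤ 0 → 0 ≤ φf g := by
    intro g hg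
    have hgcl : g ∈ closure {g | φu g < 0} := by rw [hreg]; exact hg
    have hclosed : IsClosed {g : EuclideanSpace ℝ (Fin n) | 0 ≤ φf g} :=
      isClosed_le continuous_const hcont
    exact closure_minimal (fun g' hg' => keyA g' hg') hclosed hgcl
  intro y hy
  simp only [Set.mem_iUnion] at hy ⊢
  obtain ⟨C0', hC0', hy'⟩ := hy
  have hyK : -y ∈ Kplus C0' := by rwa [Set.mem_neg] at hy'
  have hsup : sSup ((fun v => (inner ℝ v y : ℝ)) '' C0') ≤ 0 := by
    apply Real.sSup_le _ (le_refl 0)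
    rintro x ⟨v, hv, rfl⟩
    have hvc : v ∈ coneHull C0' := ⟨1, zero_le_one, v, hv, (one_smul ℝ v).symm⟩
    have h2 := hyK v hvc
    rw [inner_neg_right] at h2
    linarith
  have hφu : φu y ≤ 0 := le_trans ((hEu y).2 (mem_image_of_mem _ hC0')) hsup
  have hφf : 0 ≤ φf y := keyB y hφu
  obtain ⟨C, hC, hCeq⟩ := (hEf y).1
  refine ⟨C, hC, ?_⟩
  rintro v ⟨t, ht, w, hw, rfl⟩
  rw [real_inner_smul_left]
  have hinf : sInf ((fun w => (inner ℝ w y : ℝ)) '' C) ≤ inner ℝ w y :=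
    csInf_le (hbdd C hC y) (mem_image_of_mem _ hw)
  rw [show sInf ((fun w => (inner ℝ w y : ℝ)) '' C) = φf y from hCeq] at hinf
  exact mul_nonneg ht (le_trans hφf hinf)
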